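/- Let γ : ℝ → ℝ be C² with γ ≥ 0, γ' ≤ 0, and μγ'' + (μ−1)γ' ≥ 0 on ℝ for some μ > 1, and let p ≥ 0, q ≥ 0, s ≤ 1 with μs ≤ 1. Then Σ(u) = p·u·γ(log u) + q·u^s satisfies, for all u > 0: Σ(u) ≥ 0, uΣ'(u) − Σ(u) ≤ 0, and μu²Σ''(u) − uΣ'(u) + Σ(u) ≥ 0. -/

import Mathlib

theorem stmt_19 (p q s μ : ℝ) (hp : 0 ≤ p) (hq : 0 ≤ q) (hs : s ≤ 1)
    (hμ : 1 < μ) (hμs : μ * s ≤ 1)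
    (γ : ℝ → ℝ) (hγ : ContDiff ℝ 2 γ)
    (hγ0 : ∀ t : ℝ, 0 ≤ γ t) (hγ1 : ∀ t : ℝ, deriv γ t ≤ 0)
    (hγ2 : ∀ t : ℝ, 0 ≤ μ * deriv (deriv γ) t + (μ - 1) * deriv γ t)
    (S : ℝ → ℝ)
    (hS : ∀ u > (0:ℝ), S u = p * u * γ (Real.log u) + q * u ^ s) :
    ∀ u > (0:ℝ),
      0 ≤ S u ∧ u * deriv S u - S u ≤ 0 ∧
      0 ≤ μ * u^2 * deriv (deriv S) u - u * deriv S u + S u := by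
  have hγdiff : Differentiable ℝ γ := hγ.differentiable (by norm_num)
  have hγ' : ContDiff ℝ 1 (deriv γ) := by
    have := (contDiff_succ_iff_deriv (n := 1)).1 (by exact_mod_cast hγ)
    exact this.2.2
  have hγ'diff : Differentiable ℝ (deriv γ) := hγ'.differentiable (by norm_num)
  set f : ℝ → ℝ := fun v => p * v * γ (Real.log v) + q * v ^ s with hf
  set g : ℝ → ℝ := fun v =>
    p * (γ (Real.log v) + deriv γ (Real.log v)) + q * (s * v ^ (s - 1)) with hg
  have hderiv : ∀ v > (0:ℝ), HasDerivAt f (g v) v := by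
    intro v hv
    have hvne : v ≠ 0 := ne_of_gt hv
    have hlog : HasDerivAt Real.log (1 / v) v := by simpa using Real.hasDerivAt_log hvne
    have h1 : HasDerivAt (fun w => γ (Real.log w))
        (deriv γ (Real.log v) * (1 / v)) v :=
      ((hγdiff (Real.log v)).hasDerivAt).comp v hlog
    have h2 : HasDerivAt (fun w => p * w * γ (Real.log w))
        (p * (γ (Real.log v) + deriv γ (Real.log v))) v := by
      have := ((hasDerivAt_id v).const_mul p).mul h1
      refine this.congr_deriv ?_
      field_simp
      simp only [id_eq]
      ring
    have h3 : HasDerivAt (fun w : ℝ => w ^ s) (s * v ^ (s - 1)) v :=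
      Real.hasDerivAt_rpow_const (Or.inl hvne)
    exact h2.add (h3.const_mul q)
  have hderiv2 : ∀ v > (0:ℝ), HasDerivAt g
      (p * ((deriv γ (Real.log v) + deriv (deriv γ) (Real.log v)) * (1 / v))
        + q * (s * ((s - 1) * v ^ (s - 2)))) v := by
    intro v hv
    have hvne : v ≠ 0 := ne_of_gt hv
    have hlog : HasDerivAt Real.log (1 / v) v := by simpa using Real.hasDerivAt_log hvne
    have h1 : HasDerivAt (fun w => γ (Real.log w))
        (deriv γ (Real.log v) * (1 / v)) v :=
      ((hγdiff (Real.log v)).hasDerivAt).comp v hlog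
    have h1' : HasDerivAt (fun w => deriv γ (Real.log w))
        (deriv (deriv γ) (Real.log v) * (1 / v)) v :=
      ((hγ'diff (Real.log v)).hasDerivAt).comp v hlog
    have h3 : HasDerivAt (fun w : ℝ => w ^ (s - 1)) ((s - 1) * v ^ (s - 1 - 1)) v :=
      Real.hasDerivAt_rpow_const (Or.inl hvne)
    have := (((h1.add h1').const_mul p).add ((h3.const_mul s).const_mul q))
    refine this.congr_deriv ?_
    ring_nf
  intro u hu
  have hune : u ≠ 0 := ne_of_gt hu
  have hSf : S =ᶠ[nhds u] f := by
    filter_upwards [eventually_gt_nhds hu] with v hv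
    exact hS v hv
  have hfg : deriv f =ᶠ[nhds u] g := by
    filter_upwards [eventually_gt_nhds hu] with v hv
    exact (hderiv v hv).deriv
  have hS1 : deriv S u = g u := by
    rw [hSf.deriv_eq]; exact (hderiv u hu).deriv
  have hS2 : deriv (deriv S) u =
      p * ((deriv γ (Real.log u) + deriv (deriv γ) (Real.log u)) * (1 / u))
        + q * (s * ((s - 1) * u ^ (s - 2))) := by
    have h : deriv S =ᶠ[nhds u] g := hSf.deriv.trans hfg
    rw [h.deriv_eq]; exact (hderiv2 u hu).deriv
  have hSu : S u = p * u * γ (Real.log u) + q * u ^ s := hS u hu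
  -- power identities
  have hpow1 : u * u ^ (s - 1) = u ^ s := by
    rw [mul_comm, ← Real.rpow_add_one hune (s - 1)]; norm_num
  have hpow2 : u ^ 2 * u ^ (s - 2) = u ^ s := by
    rw [show (u:ℝ) ^ (2:ℕ) = u ^ ((2:ℝ)) by
      rw [← Real.rpow_natCast]; norm_num,
      ← Real.rpow_add hu]; ring_nf
  have hus : (0:ℝ) < u ^ s := Real.rpow_pos_of_pos hu s
  set A := γ (Real.log u)
  set B := deriv γ (Real.log u)
  set C := deriv (deriv γ) (Real.log u)
  have hA : 0 ≤ A := hγ0 _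
  have hB : B ≤ 0 := hγ1 _
  have hC : 0 ≤ μ * C + (μ - 1) * B := hγ2 _
  refine ⟨?_, ?_, ?_⟩
  · rw [hSu]
    have := mul_nonneg (mul_nonneg hp hu.le) hA
    nlinarith [mul_nonneg hq hus.le]
  · rw [hS1, hSu, hg]
    have key : u * (p * (A + B) + q * (s * u ^ (s - 1)))
        - (p * u * A + q * u ^ s) = p * u * B + q * (s - 1) * u ^ s := by
      have : u * (q * (s * u ^ (s - 1))) = q * s * u ^ s := by
        rw [show u * (q * (s * u ^ (s-1))) = q * s * (u * u ^ (s-1)) by ring, hpow1]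
      nlinarith [this]
    rw [key]
    have h1 : p * u * B ≤ 0 :=
      mul_nonpos_of_nonneg_of_nonpos (mul_nonneg hp hu.le) hB
    have h2 : q * (s - 1) * u ^ s ≤ 0 :=
      mul_nonpos_of_nonpos_of_nonneg (mul_nonpos_of_nonneg_of_nonpos hq (by linarith)) hus.le
    linarith
  · rw [hS1, hS2, hSu, hg]
    have e1 : μ * u ^ 2 * (p * ((B + C) * (1 / u)) + q * (s * ((s - 1) * u ^ (s - 2))))
        = μ * p * u * (B + C) + μ * q * s * (s - 1) * u ^ s := by
      rw [show μ * u ^ 2 * (p * ((B + C) * (1 / u)) + q * (s * ((s - 1) * u ^ (s - 2))))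
          = μ * p * (B + C) * (u ^ 2 / u) + μ * q * s * (s - 1) * (u ^ 2 * u ^ (s - 2)) by ring,
        hpow2]
      field_simp
    have e2 : u * (p * (A + B) + q * (s * u ^ (s - 1)))
        = p * u * (A + B) + q * s * u ^ s := by
      rw [show u * (p * (A + B) + q * (s * u ^ (s-1)))
          = p * u * (A + B) + q * s * (u * u ^ (s-1)) by ring, hpow1]
    rw [e1, e2]
    have key1 : 0 ≤ p * u * (μ * C + (μ - 1) * B) :=
      mul_nonneg (mul_nonneg hp hu.le) hC
    have key2 : 0 ≤ q * ((1 - s) * (1 - μ * s)) * u ^ s :=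
      mul_nonneg (mul_nonneg hq (mul_nonneg (by linarith) (by linarith))) hus.le
    nlinarith [key1, key2]
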